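/- Let G be a graph of finite asymptotic dimension d, H a finite induced subgraph, w a nonnegative weight function on V(H), and ε > 0. Set r = 2(1 + ⌊1/ε⌋) and let 𝒰₁,…,𝒰_d be the cover from the definition of asymptotic dimension with parameter r and diameter bound R. Then for each i there exists t(i) ∈ {1,…,1+⌊1/ε⌋} such that the set S_i(t(i)) of vertices of H at distance exactly t(i) from 𝒰_i satisfies w(S_i(t(i))) ≤ ε·w(V(H)), and the set S = ∪_{i=1}^d S_i(t(i)) satisfies w(S) ≤ dε·w(V(H)) and every component of H ∖ S has diameter at most d(R+1). -/

import Mathlib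

open scoped Classical

/-- Distance (in `G`) from a vertex to a set of vertices. -/
noncomputable def graphSetDist {V : Type*} (G : SimpleGraph V) (x : V) (A : Set V) : ℕ :=
  sInf {n : ℕ | ∃ a ∈ A, G.dist x a = n}

namespace AsdimAux

variable {V : Type*} {G : SimpleGraph V}

lemma gsd_le {x a : V} {A : Set V} (ha : a ∈ A) : graphSetDist G x A ≤ G.dist x a :=
  Nat.sInf_le ⟨a, ha, rfl⟩

lemma gsd_zero_of_mem {x : V} {A : Set V} (hx : x ∈ A) : graphSetDist G x A = 0 :=
  Nat.le_zero.mp (by simpa [SimpleGraph.dist_self] using gsd_le (G := G) (x := x) hx)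

lemma gsd_witness {x : V} {A : Set V} (hA : A.Nonempty) :
    ∃ a ∈ A, G.dist x a = graphSetDist G x A := by
  obtain ⟨a0, ha0⟩ := hA
  exact Nat.sInf_mem (⟨G.dist x a0, a0, ha0, rfl⟩ :
    {n : ℕ | ∃ a ∈ A, G.dist x a = n}.Nonempty)

lemma dist_tri {u v w : V} (h1 : G.Reachable u v) (h2 : G.Reachable v w) :
    G.dist u w ≤ G.dist u v + G.dist v w := by
  obtain ⟨p, hp⟩ := h1.exists_walk_length_eq_dist
  obtain ⟨q, hq⟩ := h2.exists_walk_length_eq_dist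
  calc G.dist u w ≤ (p.append q).length := SimpleGraph.dist_le _
    _ = _ := by rw [SimpleGraph.Walk.length_append, hp, hq]

lemma gsd_lip {u v : V} {A : Set V} (h : G.Adj u v) :
    graphSetDist G v A ≤ graphSetDist G u A + 1 := by
  rcases A.eq_empty_or_nonempty with rfl | hA
  · have : graphSetDist G v (∅ : Set V) = 0 := by
      have hset : {n : ℕ | ∃ a ∈ (∅ : Set V), G.dist v a = n} = ∅ := by simp
      rw [graphSetDist, hset, Nat.sInf_empty]
    omega
  obtain ⟨a, ha, hd⟩ := gsd_witness (G := G) (x := u) hA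
  have key : G.dist v a ≤ graphSetDist G u A + 1 := by
    by_cases hr : G.Reachable u a
    · have h1 : G.dist v a ≤ G.dist v u + G.dist u a := dist_tri h.symm.reachable hr
      have h2 : G.dist v u ≤ 1 := by
        have := SimpleGraph.dist_le h.symm.toWalk
        simpa using this
      omega
    · have hnr : ¬ G.Reachable v a := fun hva => hr (h.reachable.trans hva)
      simp [SimpleGraph.dist_eq_zero_of_not_reachable hnr]
  exact le_trans (gsd_le ha) key

lemma chain_reachable_head : ∀ (l : List V) (a : V), l.Chain G.Adj a →
    ∀ x ∈ a :: l, G.Reachable a x := by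
  intro l
  induction l with
  | nil => intro a _ x hx; simp at hx; subst hx; exact SimpleGraph.Reachable.refl _
  | cons b rest ih =>
    intro a hch x hx
    rw [List.Chain, List.isChain_cons_cons] at hch
    rcases List.mem_cons.mp hx with rfl | hx'
    · exact SimpleGraph.Reachable.refl x
    · exact (hch.1.reachable).trans (ih b hch.2 x hx')

lemma chain_reachable {l : List V} (hl : l.Chain' G.Adj) :
    ∀ x ∈ l, ∀ y ∈ l, G.Reachable x y := by
  intro x hx y hy
  cases l with
  | nil => simp at hx
  | cons a rest =>
    have h : rest.Chain G.Adj a := hl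
    exact (chain_reachable_head rest a h x hx).symm.trans (chain_reachable_head rest a h y hy)

lemma chain_ivt (g : V → ℕ) (hg : ∀ u v : V, G.Adj u v → g v ≤ g u + 1 ∧ g u ≤ g v + 1)
    (c : ℕ) : ∀ (l : List V), l.Chain' G.Adj →
    ∀ x ∈ l, ∀ y ∈ l, g x ≤ c → c ≤ g y → ∃ z ∈ l, g z = c := by
  intro l
  induction l with
  | nil => intro _ x hx; simp at hx
  | cons a rest ih =>
    intro hch x hx y hy hxc hcy
    by_cases hac : g a = c
    · exact ⟨a, List.mem_cons_self, hac⟩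
    rcases List.mem_cons.mp hx with rfl | hx' <;> rcases List.mem_cons.mp hy with rfl | hy'
    · omega
    · cases rest with
      | nil => simp at hy'
      | cons b rest' =>
        have hab : G.Adj x b := (List.isChain_cons_cons.mp hch).1
        have hb : g b ≤ c := by have := (hg x b hab).1; omega
        obtain ⟨z, hz, hzc⟩ := ih hch.tail b (List.mem_cons_self) y hy' hb hcy
        exact ⟨z, List.mem_cons_of_mem _ hz, hzc⟩
    · cases rest with
      | nil => simp at hx'
      | cons b rest' =>
        have hab : G.Adj y b := (List.isChain_cons_cons.mp hch).1
        have hb : c ≤ g b := by have := (hg y b hab).2; omega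
        obtain ⟨z, hz, hzc⟩ := ih hch.tail x hx' b (List.mem_cons_self) hxc hb
        exact ⟨z, List.mem_cons_of_mem _ hz, hzc⟩
    · obtain ⟨z, hz, hzc⟩ := ih hch.tail x hx' y hy' hxc hcy
      exact ⟨z, List.mem_cons_of_mem _ hz, hzc⟩

lemma chain_const_head {β : Sort*} (C : V → β) : ∀ (l : List V) (a : V), l.Chain G.Adj a →
    (∀ u ∈ a :: l, ∀ v ∈ a :: l, G.Adj u v → C u = C v) →
    ∀ x ∈ a :: l, C x = C a := by
  intro l
  induction l with
  | nil => intro a _ _ x hx; simp at hx; subst hx; rfl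
  | cons b rest ih =>
    intro a hch hcons x hx
    rw [List.Chain, List.isChain_cons_cons] at hch
    rcases List.mem_cons.mp hx with rfl | hx'
    · rfl
    · have hxb : C x = C b := by
        refine ih b hch.2 ?_ x hx'
        intro u hu v hv huv
        exact hcons u (List.mem_cons_of_mem _ hu) v (List.mem_cons_of_mem _ hv) huv
      have hba : C b = C a :=
        (hcons a (List.mem_cons_self) b (List.mem_cons_of_mem _ (List.mem_cons_self))
          hch.1).symm
      rw [hxb, hba]

lemma chain_const {β : Sort*} (C : V → β) {l : List V} (hl : l.Chain' G.Adj)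
    (hcons : ∀ u ∈ l, ∀ v ∈ l, G.Adj u v → C u = C v) :
    ∀ x ∈ l, ∀ y ∈ l, C x = C y := by
  intro x hx y hy
  cases l with
  | nil => simp at hx
  | cons a rest =>
    have h : rest.Chain G.Adj a := hl
    rw [chain_const_head C rest a h hcons x hx, chain_const_head C rest a h hcons y hy]

lemma exists_last_split (p : V → Prop) : ∀ (l : List V), (∃ x ∈ l, p x) →
    ∃ l1 a l2, l = l1 ++ a :: l2 ∧ p a ∧ ∀ b ∈ l2, ¬ p b := by
  intro l
  induction l with
  | nil => intro h; simp at h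
  | cons a rest ih =>
    intro h
    by_cases hex : ∃ x ∈ rest, p x
    · obtain ⟨l1, c, l2, heq, hc, hl2⟩ := ih hex
      exact ⟨a :: l1, c, l2, by rw [heq]; rfl, hc, hl2⟩
    · push_neg at hex
      have hpa : p a := by
        obtain ⟨x, hx, hpx⟩ := h
        rcases List.mem_cons.mp hx with rfl | hx'
        · exact hpx
        · exact absurd hpx (hex x hx')
      exact ⟨[], a, rest, rfl, hpa, hex⟩

lemma greedy {ι : Type*} [DecidableEq ι] (R : ℕ) (Asn : ι → Set V) :
    ∀ (n : ℕ) (s : Finset ι), s.card ≤ n → ∀ (l : List V) (hl : l ≠ []),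
    l.Chain' G.Adj →
    (∀ v ∈ l, ∃ i ∈ s, v ∈ Asn i) →
    (∀ i, ∀ x ∈ l, ∀ y ∈ l, x ∈ Asn i → y ∈ Asn i → G.dist x y ≤ R) →
    G.dist (l.head hl) (l.getLast hl) ≤ s.card * (R + 1) := by
  intro n
  induction n with
  | zero =>
    intro s hs l hl _ hmem _
    obtain ⟨i, hi, _⟩ := hmem (l.head hl) (List.head_mem hl)
    have : s = ∅ := Finset.card_eq_zero.mp (Nat.le_zero.mp hs); subst this
    simp at hi
  | succ n ih =>
    intro s hs l hl hch hmem hdi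
    have hhead := List.head_mem hl
    obtain ⟨i, hi, hmemi⟩ := hmem (l.head hl) hhead
    have hcard1 : 1 ≤ s.card := Finset.card_pos.mpr ⟨i, hi⟩
    obtain ⟨l1, a, l2, heq, hpa, hl2⟩ :=
      exists_last_split (· ∈ Asn i) l ⟨l.head hl, hhead, hmemi⟩
    have hal : a ∈ l := by rw [heq]; exact List.mem_append_right _ (List.mem_cons_self)
    have hda : G.dist (l.head hl) a ≤ R := hdi i _ hhead _ hal hmemi hpa
    cases l2 with
    | nil =>
      have hlast : l.getLast hl = a := by
        subst heq
        exact List.getLast_append_of_ne_nil (l := l1) hl (List.cons_ne_nil a [])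
      rw [hlast]
      calc G.dist (l.head hl) a ≤ R := hda
        _ ≤ 1 * (R + 1) := by omega
        _ ≤ s.card * (R + 1) := Nat.mul_le_mul_right _ hcard1
    | cons b l2' =>
      have hbl : b ∈ l := by
        rw [heq]; exact List.mem_append_right _ (List.mem_cons_of_mem _ (List.mem_cons_self))
      have hch2 : (a :: b :: l2').Chain' G.Adj := by
        rw [heq] at hch
        exact (List.isChain_append.mp hch).2.1
      have hab : G.Adj a b := (List.isChain_cons_cons.mp hch2).1
      have hchb : (b :: l2').Chain' G.Adj := (List.isChain_cons_cons.mp hch2).2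
      have hmem' : ∀ v ∈ b :: l2', ∃ j ∈ s.erase i, v ∈ Asn j := by
        intro v hv
        have hvl : v ∈ l := by
          rw [heq]; exact List.mem_append_right _ (List.mem_cons_of_mem _ hv)
        obtain ⟨j, hj, hvj⟩ := hmem v hvl
        have hji : j ≠ i := fun h => hl2 v hv (h ▸ hvj)
        exact ⟨j, Finset.mem_erase.mpr ⟨hji, hj⟩, hvj⟩
      have hdi' : ∀ j, ∀ x ∈ b :: l2', ∀ y ∈ b :: l2', x ∈ Asn j → y ∈ Asn j →
          G.dist x y ≤ R := by
        intro j x hx y hy hxj hyj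
        have hxl : x ∈ l := by
          rw [heq]; exact List.mem_append_right _ (List.mem_cons_of_mem _ hx)
        have hyl : y ∈ l := by
          rw [heq]; exact List.mem_append_right _ (List.mem_cons_of_mem _ hy)
        exact hdi j x hxl y hyl hxj hyj
      have hcard' : (s.erase i).card ≤ n := by
        rw [Finset.card_erase_of_mem hi]; omega
      have hrec := ih (s.erase i) hcard' (b :: l2') (List.cons_ne_nil _ _) hchb hmem' hdi'
      have hheadb : (b :: l2').head (List.cons_ne_nil _ _) = b := rfl
      rw [hheadb] at hrec
      have hlast : l.getLast hl = (b :: l2').getLast (List.cons_ne_nil _ _) := by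
        subst heq
        rw [List.getLast_append_of_ne_nil (l := l1) _ (List.cons_ne_nil a (b :: l2'))]
        exact List.getLast_cons_cons
      have hr1 : G.Reachable (l.head hl) a := chain_reachable hch _ hhead _ hal
      have hr2 : G.Reachable a b := hab.reachable
      have hr3 : G.Reachable b (l.getLast hl) :=
        chain_reachable hch _ hbl _ (List.getLast_mem hl)
      have t1 : G.dist (l.head hl) (l.getLast hl) ≤
          G.dist (l.head hl) a + G.dist a (l.getLast hl) :=
        dist_tri hr1 (hr2.trans hr3)
      have t2 : G.dist a (l.getLast hl) ≤ G.dist a b + G.dist b (l.getLast hl) :=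
        dist_tri hr2 hr3
      have hdab : G.dist a b ≤ 1 := by
        have := SimpleGraph.dist_le hab.toWalk
        simpa using this
      rw [← hlast] at hrec
      have hcards : (s.erase i).card = s.card - 1 := Finset.card_erase_of_mem hi
      rw [hcards] at hrec
      obtain ⟨k, hk⟩ : ∃ k, s.card = k + 1 := ⟨s.card - 1, by omega⟩
      rw [hk] at hrec ⊢
      simp only [Nat.add_sub_cancel] at hrec
      have : (k + 1) * (R + 1) = k * (R + 1) + (R + 1) := by ring
      omega

end AsdimAux

/-- The key step in proving weighted hyperfiniteness from finite asymptotic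
dimension: given the cover `𝒰₁,…,𝒰_d` with parameter `r = 2(1+⌊1/ε⌋)` and
diameter bound `R`, for each `i` some level set `S_i(t(i))` (vertices of `H` at
distance exactly `t(i)` from `𝒰_i`, with `1 ≤ t(i) ≤ 1+⌊1/ε⌋`) has weight at
most `ε·w(H)`; their union `S` has weight at most `d·ε·w(H)`, and every
component of `H ∖ S` has diameter at most `d(R+1)`. -/
theorem asdim_separating_set
    {V : Type*} [DecidableEq V] (G : SimpleGraph V)
    (d : ℕ) (ε : ℝ) (hε : 0 < ε)
    (R : ℕ) (U : Fin d → Set (Set V))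
    (hcover : ∀ v : V, ∃ i, ∃ A ∈ U i, v ∈ A)
    (hdiam : ∀ i, ∀ A ∈ U i, ∀ x ∈ A, ∀ y ∈ A, G.dist x y ≤ R)
    (hsep : ∀ i, ∀ A ∈ U i, ∀ B ∈ U i, A ≠ B → ∀ x ∈ A, ∀ y ∈ B,
      2 * (1 + Nat.floor (1 / ε)) ≤ G.dist x y)
    (H : Finset V) (w : V → ℝ) (hw : ∀ x, 0 ≤ w x) :
    ∃ t : Fin d → ℕ,
      (∀ i, 1 ≤ t i ∧ t i ≤ 1 + Nat.floor (1 / ε)) ∧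
      (∀ i, ∑ x ∈ H.filter (fun x => graphSetDist G x (⋃₀ U i) = t i), w x
        ≤ ε * ∑ x ∈ H, w x) ∧
      (∑ x ∈ H.filter (fun x => ∃ i, graphSetDist G x (⋃₀ U i) = t i), w x
        ≤ d * ε * ∑ x ∈ H, w x) ∧
      (∀ x y : ((H.filter
            (fun x => ¬ ∃ i, graphSetDist G x (⋃₀ U i) = t i) : Finset V) : Set V),
        (G.induce _).Reachable x y → G.dist x.1 y.1 ≤ d * (R + 1)) := by
  classical
  set m := 1 + Nat.floor (1 / ε) with hm
  set T := ∑ x ∈ H, w x with hTdef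
  have hT0 : 0 ≤ T := Finset.sum_nonneg fun x _ => hw x
  have hmε : 1 ≤ ε * m := by
    have h1 : (1 / ε : ℝ) < (m : ℕ) := by
      have := Nat.lt_floor_add_one (1 / ε)
      rw [hm]
      push_cast
      linarith
    have h2 : ε * (1 / ε) ≤ ε * m := le_of_lt (by exact mul_lt_mul_of_pos_left h1 hε)
    have h3 : ε * (1 / ε) = 1 := by field_simp
    linarith
  -- pigeonhole
  have key : ∀ i : Fin d, ∃ j : ℕ, (1 ≤ j ∧ j ≤ m) ∧
      ∑ x ∈ H.filter (fun x => graphSetDist G x (⋃₀ U i) = j), w x ≤ ε * T := by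
    intro i
    by_contra hcon
    push_neg at hcon
    have h1 : ∑ j ∈ Finset.Icc 1 m,
        ∑ x ∈ H.filter (fun x => graphSetDist G x (⋃₀ U i) = j), w x
        = ∑ x ∈ H.filter (fun x => graphSetDist G x (⋃₀ U i) ∈ Finset.Icc 1 m), w x :=
      Finset.sum_fiberwise_eq_sum_filter _ _ _ _
    have h2 : ∑ x ∈ H.filter (fun x => graphSetDist G x (⋃₀ U i) ∈ Finset.Icc 1 m), w x ≤ T :=
      Finset.sum_le_sum_of_subset_of_nonneg (Finset.filter_subset _ _) (fun x _ _ => hw x)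
    have h3 : ∑ _j ∈ Finset.Icc 1 m, (ε * T) <
        ∑ j ∈ Finset.Icc 1 m,
          ∑ x ∈ H.filter (fun x => graphSetDist G x (⋃₀ U i) = j), w x := by
      apply Finset.sum_lt_sum_of_nonempty
      · refine ⟨1, Finset.mem_Icc.mpr ⟨le_refl 1, ?_⟩⟩
        rw [hm]; omega
      · intro j hj
        rw [Finset.mem_Icc] at hj
        exact hcon j hj
    have h4 : ∑ _j ∈ Finset.Icc 1 m, (ε * T) = m * (ε * T) := by
      rw [Finset.sum_const, Nat.card_Icc, nsmul_eq_mul]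
      norm_num
    have h5 : T ≤ (m : ℝ) * (ε * T) := by
      calc T = 1 * T := (one_mul T).symm
        _ ≤ (ε * m) * T := mul_le_mul_of_nonneg_right hmε hT0
        _ = (m : ℝ) * (ε * T) := by ring
    rw [h4] at h3
    rw [h1] at h3
    linarith
  choose t ht1 ht2 using key
  refine ⟨t, ht1, ht2, ?_, ?_⟩
  · -- union bound
    have step1 : ∀ x ∈ H.filter (fun x => ∃ i, graphSetDist G x (⋃₀ U i) = t i),
        w x ≤ ∑ i : Fin d, (if graphSetDist G x (⋃₀ U i) = t i then w x else 0) := by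
      intro x hx
      obtain ⟨i, hi⟩ := (Finset.mem_filter.mp hx).2
      calc w x = if graphSetDist G x (⋃₀ U i) = t i then w x else 0 := (if_pos hi).symm
        _ ≤ ∑ j : Fin d, (if graphSetDist G x (⋃₀ U j) = t j then w x else 0) :=
          Finset.single_le_sum
            (f := fun j => if graphSetDist G x (⋃₀ U j) = t j then w x else 0)
            (fun j _ => by split_ifs; exacts [hw x, le_refl 0])
            (Finset.mem_univ i)
    calc ∑ x ∈ H.filter (fun x => ∃ i, graphSetDist G x (⋃₀ U i) = t i), w x
        ≤ ∑ x ∈ H.filter (fun x => ∃ i, graphSetDist G x (⋃₀ U i) = t i),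
            ∑ i : Fin d, (if graphSetDist G x (⋃₀ U i) = t i then w x else 0) :=
          Finset.sum_le_sum step1
      _ ≤ ∑ x ∈ H, ∑ i : Fin d, (if graphSetDist G x (⋃₀ U i) = t i then w x else 0) :=
          Finset.sum_le_sum_of_subset_of_nonneg (Finset.filter_subset _ _)
            (fun x _ _ => Finset.sum_nonneg fun j _ => by
              split_ifs; exacts [hw x, le_refl 0])
      _ = ∑ i : Fin d, ∑ x ∈ H, (if graphSetDist G x (⋃₀ U i) = t i then w x else 0) :=
          Finset.sum_comm
      _ = ∑ i : Fin d, ∑ x ∈ H.filter (fun x => graphSetDist G x (⋃₀ U i) = t i), w x := by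
          refine Finset.sum_congr rfl fun i _ => ?_
          rw [Finset.sum_filter]
      _ ≤ ∑ _i : Fin d, (ε * T) := Finset.sum_le_sum fun i _ => ht2 i
      _ = d * ε * T := by
          rw [Finset.sum_const, Finset.card_univ, Fintype.card_fin, nsmul_eq_mul]
          ring
  · -- component diameter
    intro x y hxy
    obtain ⟨W⟩ := hxy
    set l : List V := W.support.map Subtype.val with hldef
    have hlnil : l ≠ [] := by
      intro h
      rw [hldef] at h
      exact W.support_ne_nil (List.map_eq_nil_iff.mp h)
    have hchain : l.Chain' G.Adj := by
      have h := W.isChain_adj_support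
      exact List.isChain_map_of_isChain Subtype.val (fun a b hab => hab) h
    have hmemS : ∀ v ∈ l, v ∈ H ∧ ¬ ∃ i, graphSetDist G v (⋃₀ U i) = t i := by
      intro v hv
      rw [hldef] at hv
      obtain ⟨u, _, rfl⟩ := List.mem_map.mp hv
      have hu : u.1 ∈ H.filter (fun x => ¬ ∃ i, graphSetDist G x (⋃₀ U i) = t i) := by
        exact_mod_cast u.2
      exact Finset.mem_filter.mp hu
    have hHc : ∀ v ∈ l, ∀ i, graphSetDist G v (⋃₀ U i) ≠ t i :=
      fun v hv i h => (hmemS v hv).2 ⟨i, h⟩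
    have hhead : l.head hlnil = x.1 :=
      (List.head_map (f := Subtype.val) (l := W.support) hlnil).trans (congrArg Subtype.val W.head_support)
    have hlast : l.getLast hlnil = y.1 :=
      (List.getLast_map (f := Subtype.val) (l := W.support) hlnil).trans (congrArg Subtype.val W.getLast_support)
    -- the same-set claim
    have same : ∀ i : Fin d, ∀ A ∈ U i, ∀ B ∈ U i, ∀ p ∈ l, ∀ q ∈ l,
        p ∈ A → q ∈ B → A = B := by
      intro i A hA B hB p hp q hq hpA hqB
      by_contra hAB
      have hreachU : ∀ a ∈ ⋃₀ U i, ∀ v ∈ l, G.Reachable v a := by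
        intro a ha v hv
        obtain ⟨C, hC, haC⟩ := ha
        by_cases hCA : C = A
        · subst hCA
          have hd := hsep i C hC B hB hAB a haC q hqB
          have hra : G.Reachable a q := SimpleGraph.Reachable.of_dist_ne_zero (by omega)
          exact (AsdimAux.chain_reachable hchain v hv q hq).trans hra.symm
        · have hd := hsep i C hC A hA hCA a haC p hpA
          have hra : G.Reachable a p := SimpleGraph.Reachable.of_dist_ne_zero (by omega)
          exact (AsdimAux.chain_reachable hchain v hv p hp).trans hra.symm
      have hne : (⋃₀ U i).Nonempty := ⟨p, A, hA, hpA⟩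
      have hp0 : graphSetDist G p (⋃₀ U i) = 0 := AsdimAux.gsd_zero_of_mem ⟨A, hA, hpA⟩
      by_cases hbig : ∃ v ∈ l, t i ≤ graphSetDist G v (⋃₀ U i)
      · obtain ⟨v, hv, hval⟩ := hbig
        have hg : ∀ u v' : V, G.Adj u v' →
            graphSetDist G v' (⋃₀ U i) ≤ graphSetDist G u (⋃₀ U i) + 1 ∧
            graphSetDist G u (⋃₀ U i) ≤ graphSetDist G v' (⋃₀ U i) + 1 :=
          fun u v' h => ⟨AsdimAux.gsd_lip h, AsdimAux.gsd_lip h.symm⟩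
        obtain ⟨z, hz, hzc⟩ := AsdimAux.chain_ivt _ hg (t i) l hchain p hp v hv
          (by rw [hp0]; exact Nat.zero_le _) hval
        exact hHc z hz i hzc
      · push_neg at hbig
        have hQ : ∀ v : V, ∃ C, C ∈ U i ∧
            ∃ a, a ∈ C ∧ G.dist v a = graphSetDist G v (⋃₀ U i) := by
          intro v
          obtain ⟨a, ⟨C, hC, haC⟩, hdd⟩ := AsdimAux.gsd_witness (G := G) (x := v) hne
          exact ⟨C, hC, a, haC, hdd⟩
        choose Cs hCs wit hwit hwd using hQ
        have hcons : ∀ u ∈ l, ∀ v ∈ l, G.Adj u v → Cs u = Cs v := by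
          intro u hu v hv huv
          by_contra hne'
          have hd := hsep i (Cs u) (hCs u) (Cs v) (hCs v) hne' (wit u) (hwit u) (wit v) (hwit v)
          have hru : G.Reachable u (wit u) := hreachU (wit u) ⟨Cs u, hCs u, hwit u⟩ u hu
          have hrv : G.Reachable v (wit v) := hreachU (wit v) ⟨Cs v, hCs v, hwit v⟩ v hv
          have t1 : G.dist (wit u) (wit v) ≤ G.dist (wit u) u + G.dist u (wit v) :=
            AsdimAux.dist_tri hru.symm (huv.reachable.trans hrv)
          have t2 : G.dist u (wit v) ≤ G.dist u v + G.dist v (wit v) :=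
            AsdimAux.dist_tri huv.reachable hrv
          have t3 : G.dist u v ≤ 1 := by simpa using SimpleGraph.dist_le huv.toWalk
          have e1 : G.dist (wit u) u = graphSetDist G u (⋃₀ U i) := by
            rw [SimpleGraph.dist_comm]; exact hwd u
          have e2 : G.dist v (wit v) = graphSetDist G v (⋃₀ U i) := hwd v
          have b1 : graphSetDist G u (⋃₀ U i) < t i := hbig u hu
          have b2 : graphSetDist G v (⋃₀ U i) < t i := hbig v hv
          have b3 : t i ≤ m := (ht1 i).2
          omega
        have hCeq := AsdimAux.chain_const Cs hchain hcons p hp q hq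
        have hCsA : Cs p = A := by
          by_contra hCn
          have hd := hsep i (Cs p) (hCs p) A hA hCn (wit p) (hwit p) p hpA
          have hz : G.dist p (wit p) = 0 := by rw [hwd p, hp0]
          rw [SimpleGraph.dist_comm] at hz
          omega
        have hCsB : Cs q = B := by
          by_contra hCn
          have hq0 : graphSetDist G q (⋃₀ U i) = 0 := AsdimAux.gsd_zero_of_mem ⟨B, hB, hqB⟩
          have hd := hsep i (Cs q) (hCs q) B hB hCn (wit q) (hwit q) q hqB
          have hz : G.dist q (wit q) = 0 := by rw [hwd q, hq0]
          rw [SimpleGraph.dist_comm] at hz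
          omega
        exact hAB (hCsA ▸ hCsB ▸ hCeq)
    -- greedy covering
    set Asn : Fin d → Set V := fun j => {z | ∃ A ∈ U j, z ∈ A ∧ ∃ v ∈ l, v ∈ A} with hAsn
    have hAsnmem : ∀ v ∈ l, ∃ j ∈ (Finset.univ : Finset (Fin d)), v ∈ Asn j := by
      intro v hv
      obtain ⟨j, A, hA, hvA⟩ := hcover v
      exact ⟨j, Finset.mem_univ j, ⟨A, hA, hvA, v, hv, hvA⟩⟩
    have hAsndiam : ∀ j, ∀ a ∈ l, ∀ b ∈ l, a ∈ Asn j → b ∈ Asn j → G.dist a b ≤ R := by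
      intro j a ha b hb haj hbj
      obtain ⟨A, hA, haA, v, hv, hvA⟩ := haj
      obtain ⟨B, hB, hbB, v', hv', hv'B⟩ := hbj
      have hABeq : A = B := same j A hA B hB v hv v' hv' hvA hv'B
      exact hdiam j A hA a haA b (hABeq ▸ hbB)
    have hfin := AsdimAux.greedy R Asn d Finset.univ
      (by rw [Finset.card_univ, Fintype.card_fin]) l hlnil hchain hAsnmem hAsndiam
    rw [hhead, hlast, Finset.card_univ, Fintype.card_fin] at hfin
    exact hfin
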